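/- For every nonnegative integer n, n/2 ≤ D(n) ≤ n (i.e., n ≤ 2·D(n) and D(n) ≤ n). -/

import Mathlib

/-- f m = (#1 digits) - (#0 digits) in the binary expansion of m. -/
def f (m : ℕ) : ℤ :=
  2 * ((Nat.digits 2 m).count 1 : ℤ) - ((Nat.digits 2 m).length : ℤ)

/-- Cumulated deficient binary digit sum (OEIS A268289), D 0 = 0. -/
def D (n : ℕ) : ℤ := ∑ m ∈ Finset.Icc 1 n, f m

lemma f_odd (k : ℕ) : f (2 * k + 1) = f k + 1 := by
  have h : Nat.digits 2 (2 * k + 1) = 1 :: Nat.digits 2 k := by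
    rw [Nat.digits_def' (by norm_num) (by omega)]
    congr 1
    · omega
    · congr 1; omega
  unfold f
  rw [h]
  simp [List.count_cons]
  push_cast
  ring

lemma f_even (k : ℕ) (hk : 1 ≤ k) : f (2 * k) = f k - 1 := by
  have h : Nat.digits 2 (2 * k) = 0 :: Nat.digits 2 k := by
    rw [Nat.digits_def' (by norm_num) (by omega)]
    congr 1
    · omega
    · congr 1; omega
  unfold f
  rw [h]
  simp [List.count_cons]
  push_cast
  ring

lemma D_succ (n : ℕ) : D (n + 1) = D n + f (n + 1) := by
  unfold D
  rw [Finset.sum_Icc_succ_top (by omega)]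

lemma f_one : f 1 = 1 := by
  have : Nat.digits 2 1 = [1] := by
    rw [Nat.digits_def' (by norm_num) (by norm_num)]
    norm_num
  simp [f, this]

lemma D_odd (k : ℕ) : D (2 * k + 1) = 2 * D k + 1 := by
  induction k with
  | zero =>
      have : D 1 = D 0 + f 1 := D_succ 0
      simp [D] at this ⊢
      simp [f_one]
  | succ k ih =>
      have hf1 : f (2 * k + 1 + 1) = f (k + 1) - 1 := by
        have := f_even (k + 1) (by omega)
        rwa [show 2 * (k + 1) = 2 * k + 1 + 1 by ring] at this
      have hf2 : f (2 * k + 1 + 1 + 1) = f (k + 1) + 1 := by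
        have := f_odd (k + 1)
        rwa [show 2 * (k + 1) + 1 = 2 * k + 1 + 1 + 1 by ring] at this
      have h1 := D_succ (2 * k + 1)
      have h2 := D_succ (2 * k + 1 + 1)
      have h3 := D_succ k
      rw [show 2 * (k + 1) + 1 = 2 * k + 1 + 1 + 1 by ring, h2, h1, ih, hf1, hf2, h3]
      ring

lemma D_even (k : ℕ) (hk : 1 ≤ k) : D (2 * k) = 2 * D k - f k := by
  have h1 : D (2 * k + 1) = D (2 * k) + f (2 * k + 1) := D_succ _
  have h2 := D_odd k
  have h3 := f_odd k
  omega

lemma key : ∀ n : ℕ, 1 ≤ n → 0 ≤ 2 * D n - n ∧ 2 * D n - n ≤ n ∧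
    2 * f n ≤ 2 * D n - n + 1 ∧ 2 * D n - 2 * n + 2 ≤ 2 * f n := by
  intro n
  induction n using Nat.strong_induction_on with
  | _ n ih =>
    intro hn
    rcases Nat.even_or_odd n with ⟨k, hk⟩ | ⟨k, hk⟩
    · -- n = 2k, k ≥ 1
      have hk1 : 1 ≤ k := by omega
      have hn2 : n = 2 * k := by omega
      subst hn2
      have hD := D_even k hk1
      have hf := f_even k hk1
      have := ih k (by omega) hk1
      push_cast
      omega
    · -- n = 2k+1
      have hn2 : n = 2 * k + 1 := by omega
      subst hn2
      have hD := D_odd k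
      have hf := f_odd k
      rcases Nat.eq_zero_or_pos k with h0 | h1
      · subst h0
        have hD1 : D 1 = 1 := by
          rw [show (1 : ℕ) = 2 * 0 + 1 from rfl, D_odd]
          simp [D]
        norm_num [hD1, f_one]
      · have := ih k (by omega) h1
        push_cast
        omega

theorem stmt_19 (n : ℕ) : (n : ℤ) ≤ 2 * D n ∧ D n ≤ n := by
  rcases Nat.eq_zero_or_pos n with h | h
  · subst h; simp [D]
  · have := key n h
    omega
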